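/- Let Z be the Pauli Z matrix and consider p_id, p_ud ≥ 0 with p_id + p_ud = 1, and real angles φ, φ₁. Let ρ = p_id |r_φ⟩⟨r_φ| + p_ud |r_{φ₁}⟩⟨r_{φ₁}| where |r_α⟩ = exp(iαZ)|+⟩. Then the trace distance (1/2)‖ρ − |r_φ⟩⟨r_φ|‖₁ ≤ p_ud · |sin(φ − φ₁)|. -/

import Mathlib

open Matrix NormedSpace

/-- The trace (nuclear) norm of a Hermitian matrix: the sum of the absolute values of its
eigenvalues (defined as `0` on non-Hermitian matrices, which never occurs below). -/
noncomputable def traceNorm {n : Type*} [Fintype n] [DecidableEq n]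
    (M : Matrix n n ℂ) : ℝ :=
  if h : M.IsHermitian then ∑ i, |h.eigenvalues i| else 0

/-- The Pauli `Z` matrix. -/
def PauliZ : Matrix (Fin 2) (Fin 2) ℂ := !![1, 0; 0, -1]

/-- The `+` state `(1,1)/√2` in `ℂ²`. -/
noncomputable def ketPlus : Fin 2 → ℂ := ![(1 : ℂ) / Real.sqrt 2, (1 : ℂ) / Real.sqrt 2]

/-- The rotated ancilla state `|r_α⟩ = exp(iαZ)|+⟩`. -/
noncomputable def rKet (α : ℝ) : Fin 2 → ℂ :=
  (exp ((Complex.I * (α : ℂ)) • PauliZ)).mulVec ketPlus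

/-- The pure-state density matrix `|r_α⟩⟨r_α|`. -/
noncomputable def rProj (α : ℝ) : Matrix (Fin 2) (Fin 2) ℂ :=
  vecMulVec (rKet α) (star (rKet α))

lemma pauliZ_eq : PauliZ = diagonal ![1, -1] := by
  ext i j; fin_cases i <;> fin_cases j <;> simp [PauliZ]

lemma rKet_eq (α : ℝ) :
    rKet α = ![Complex.exp (Complex.I * α) / Real.sqrt 2,
               Complex.exp (-(Complex.I * α)) / Real.sqrt 2] := by
  have h : (Complex.I * (α : ℂ)) • PauliZ
      = diagonal ![Complex.I * α, -(Complex.I * α)] := by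
    rw [pauliZ_eq]
    ext i j
    fin_cases i <;> fin_cases j <;> simp [diagonal]
  rw [rKet, h, exp_diagonal, Pi.exp_def]
  ext i
  fin_cases i <;>
    simp [mulVec, ketPlus, dotProduct, Fin.sum_univ_two, diagonal, Complex.exp_eq_exp_ℂ,
      div_eq_mul_inv]

lemma rProj_eq (α : ℝ) :
    rProj α = !![1/2, Complex.exp (Complex.I * (2*α)) / 2;
                 Complex.exp (-(Complex.I * (2*α))) / 2, 1/2] := by
  have h2 : ((Real.sqrt 2 : ℝ) : ℂ) * ((Real.sqrt 2 : ℝ) : ℂ) = 2 := by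
    rw [← Complex.ofReal_mul, Real.mul_self_sqrt (by norm_num : (0:ℝ) ≤ 2)]
    norm_num
  have hne : ((Real.sqrt 2 : ℝ) : ℂ) ≠ 0 := by
    intro h0
    rw [h0, zero_mul] at h2
    norm_num at h2
  ext i j
  fin_cases i <;> fin_cases j <;>
    simp [rProj, vecMulVec_apply, rKet_eq, star_div₀, ← Complex.exp_conj,
      Complex.conj_ofReal, div_mul_div_comm, ← Complex.exp_add, h2] <;>
    (congr 1; ring)

lemma herm_off (c : ℂ) : (!![0, c; (starRingEnd ℂ) c, 0]).IsHermitian := by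
  rw [Matrix.IsHermitian]
  ext i j
  fin_cases i <;> fin_cases j <;> simp [conjTranspose_apply]

lemma trace_eq_sum_eigen {n : Type*} [Fintype n] [DecidableEq n] {A : Matrix n n ℂ}
    (h : A.IsHermitian) : A.trace = ∑ i, (h.eigenvalues i : ℂ) := by
  exact h.trace_eq_sum_eigenvalues

lemma traceNorm_off (c : ℂ) :
    traceNorm !![0, c; (starRingEnd ℂ) c, 0] = 2 * ‖c‖ := by
  have h := herm_off c
  rw [traceNorm, dif_pos h]
  set l := h.eigenvalues with hl
  have htr : (l 0 : ℂ) + l 1 = 0 := by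
    have := (trace_eq_sum_eigen h).symm
    rwa [Fin.sum_univ_two, Matrix.trace_fin_two,
      show !![0, c; (starRingEnd ℂ) c, 0] 0 0 = 0 from rfl,
      show !![0, c; (starRingEnd ℂ) c, 0] 1 1 = 0 from rfl, add_zero] at this
  have htr' : l 0 + l 1 = 0 := by exact_mod_cast htr
  have hdet : (l 0 : ℂ) * l 1 = -(c * (starRingEnd ℂ) c) := by
    have := h.det_eq_prod_eigenvalues
    rw [Matrix.det_fin_two] at this
    simp only [Fin.prod_univ_two] at this
    rw [← hl] at this
    norm_num at this
    linear_combination -this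
  have hdet' : l 0 * l 1 = -‖c‖^2 := by
    have : ((l 0 * l 1 : ℝ) : ℂ) = ((-‖c‖^2 : ℝ) : ℂ) := by
      push_cast
      rw [hdet, Complex.mul_conj, Complex.normSq_eq_norm_sq]
      push_cast; ring
    exact_mod_cast this
  have h1 : l 1 = - l 0 := by linarith
  rw [Fin.sum_univ_two, h1, abs_neg]
  have hsq : l 0 ^ 2 = ‖c‖ ^ 2 := by
    rw [h1] at hdet'; nlinarith [hdet']
  have habs : |l 0| = ‖c‖ := by
    rw [← Real.sqrt_sq_eq_abs, hsq, Real.sqrt_sq (norm_nonneg c)]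
  rw [habs]; ring

lemma exp_sub_exp (θ : ℝ) :
    Complex.exp (Complex.I * θ) - Complex.exp (-(Complex.I * θ))
      = 2 * Complex.I * Real.sin θ := by
  rw [show Complex.I * (θ:ℂ) = (θ:ℂ) * Complex.I by ring, Complex.exp_mul_I,
    show -((θ:ℂ) * Complex.I) = ((-θ : ℝ) : ℂ) * Complex.I by push_cast; ring,
    Complex.exp_mul_I]
  push_cast [Complex.ofReal_sin]
  simp [Complex.sin_neg, Complex.cos_neg]
  ring

/-- The trace distance of the post-selected mixture
`ρ = p_id |r_φ⟩⟨r_φ| + p_ud |r_{φ₁}⟩⟨r_{φ₁}|` to the ideal rotation state is bounded by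
`p_ud |sin(φ - φ₁)|`. -/
theorem traceDist_mixture_le (p_id p_ud : ℝ) (hid : 0 ≤ p_id) (hud : 0 ≤ p_ud)
    (hsum : p_id + p_ud = 1) (φ φ₁ : ℝ) :
    (1 / 2 : ℝ) * traceNorm
        (((p_id : ℂ) • rProj φ + (p_ud : ℂ) • rProj φ₁) - rProj φ)
      ≤ p_ud * |Real.sin (φ - φ₁)| := by
  set c : ℂ := (p_ud : ℂ) / 2 * (Complex.exp (Complex.I * (2*φ₁)) - Complex.exp (Complex.I * (2*φ)))
    with hc
  have hM : ((p_id : ℂ) • rProj φ + (p_ud : ℂ) • rProj φ₁) - rProj φ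
      = !![0, c; (starRingEnd ℂ) c, 0] := by
    have hpid : (p_id : ℂ) = 1 - p_ud := by
      have : (p_id : ℝ) = 1 - p_ud := by linarith
      exact_mod_cast this
    rw [rProj_eq, rProj_eq]
    ext i j
    fin_cases i <;> fin_cases j <;>
    · simp only [Matrix.sub_apply, Matrix.add_apply, Matrix.smul_apply, smul_eq_mul,
        Matrix.cons_val', Matrix.cons_val_zero, Matrix.cons_val_one, Matrix.head_cons,
        Matrix.empty_val', Matrix.cons_val_fin_one, Matrix.head_fin_const, hpid, hc,
        map_sub, _root_.map_mul, map_div₀, map_ofNat, Complex.conj_ofReal,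
        ← Complex.exp_conj, Complex.conj_I]
      push_cast
      ring_nf
      try (simp; try ring_nf)
  rw [hM, traceNorm_off]
  have hfac : Complex.exp (Complex.I * (2*(φ₁:ℂ))) - Complex.exp (Complex.I * (2*(φ:ℂ)))
      = Complex.exp (Complex.I * ((φ:ℂ) + φ₁)) *
        (Complex.exp (Complex.I * ((φ₁:ℂ) - φ)) - Complex.exp (-(Complex.I * ((φ₁:ℂ) - φ)))) := by
    rw [mul_sub, ← Complex.exp_add, ← Complex.exp_add]
    congr 2 <;> push_cast <;> ring
  have hθ : ((φ₁ : ℂ) - φ) = ((φ₁ - φ : ℝ) : ℂ) := by push_cast; ring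
  rw [hc, hfac, hθ, exp_sub_exp]
  have h1 : ‖Complex.exp (Complex.I * ((φ:ℂ) + φ₁))‖ = 1 := by
    rw [show Complex.I * ((φ:ℂ) + φ₁) = ((φ + φ₁ : ℝ) : ℂ) * Complex.I by push_cast; ring]
    exact Complex.norm_exp_ofReal_mul_I (φ + φ₁)
  rw [norm_mul, norm_mul, norm_mul, norm_mul, norm_div, h1]
  simp only [Complex.norm_real, Real.norm_eq_abs, Complex.norm_two, Complex.norm_I, Complex.norm_ofNat]
  rw [abs_of_nonneg hud]
  have h3 : |Real.sin (φ₁ - φ)| = |Real.sin (φ - φ₁)| := by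
    rw [show φ₁ - φ = -(φ - φ₁) by ring, Real.sin_neg, abs_neg]
  rw [h3]
  ring_nf
  rfl
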